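/- The polynomial p(z₁,z₂) = z₁(z₂ − 1) is Γ-distinguished but not 'distinguished': (0,0) ∈ Z(p) ∩ 𝔾₂ and Z(p) ∩ (Γ \ 𝔾₂) ⊆ bΓ, yet the point (5/2, 1) ∈ Z(p) does not belong to 𝔾₂ ∪ bΓ ∪ π(𝔼²), because the only pairs with sum 5/2 and product 1 are (2, 1/2) and (1/2, 2), neither of which lies in 𝔻² ∪ 𝕋² ∪ 𝔼². -/

import Mathlib

noncomputable section

def G2 : Set (ℂ × ℂ) :=
  {w | ∃ z₁ z₂ : ℂ, ‖z₁‖ < 1 ∧ ‖z₂‖ < 1 ∧ w = (z₁ + z₂, z₁ * z₂)}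

def GammaSet : Set (ℂ × ℂ) :=
  {w | ∃ z₁ z₂ : ℂ, ‖z₁‖ ≤ 1 ∧ ‖z₂‖ ≤ 1 ∧ w = (z₁ + z₂, z₁ * z₂)}

def bGamma : Set (ℂ × ℂ) :=
  {w | ∃ z₁ z₂ : ℂ, ‖z₁‖ = 1 ∧ ‖z₂‖ = 1 ∧ w = (z₁ + z₂, z₁ * z₂)}

/-- π(𝔼²): symmetrization of pairs of points outside the closed unit disc. -/
def piE2 : Set (ℂ × ℂ) :=
  {w | ∃ z₁ z₂ : ℂ, 1 < ‖z₁‖ ∧ 1 < ‖z₂‖ ∧ w = (z₁ + z₂, z₁ * z₂)}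

def Zset (p : MvPolynomial (Fin 2) ℂ) : Set (ℂ × ℂ) :=
  {w | MvPolynomial.eval ![w.1, w.2] p = 0}

def GammaDistinguished (p : MvPolynomial (Fin 2) ℂ) : Prop :=
  (Zset p ∩ G2).Nonempty ∧ Zset p ∩ (GammaSet \ G2) ⊆ bGamma

lemma key_root (z₁ z₂ : ℂ) (h1 : z₁ + z₂ = 5 / 2) (h2 : z₁ * z₂ = 1) :
    (‖z₁‖ = 2 ∧ ‖z₂‖ = 1 / 2) ∨
    (‖z₁‖ = 1 / 2 ∧ ‖z₂‖ = 2) := by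
  have hq : (z₁ - 2) * (z₁ - 1 / 2) = 0 := by linear_combination z₁ * h1 - h2
  have ha : ‖(2 : ℂ)‖ = 2 := by norm_num
  have hb : ‖(1/2 : ℂ)‖ = 1/2 := by
    rw [norm_div]; norm_num
  rcases mul_eq_zero.1 hq with h | h
  · have hz1 : z₁ = 2 := sub_eq_zero.1 h
    have hz2 : z₂ = 1/2 := by rw [hz1] at h1; linear_combination h1
    left; rw [hz1, hz2]; exact ⟨ha, hb⟩
  · have hz1 : z₁ = 1/2 := sub_eq_zero.1 h
    have hz2 : z₂ = 2 := by rw [hz1] at h1; linear_combination h1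
    right; rw [hz1, hz2]; exact ⟨hb, ha⟩

lemma Zeval (w : ℂ × ℂ) :
    w ∈ Zset (MvPolynomial.X 0 * (MvPolynomial.X 1 - 1)) ↔ w.1 * (w.2 - 1) = 0 := by
  simp [Zset]

/-- p(z₁,z₂) = z₁(z₂ − 1) is Γ-distinguished but not distinguished: the point
(5/2, 1) lies in Z(p) but not in 𝔾₂ ∪ bΓ ∪ π(𝔼²). -/
theorem stmt19 :
    letI p : MvPolynomial (Fin 2) ℂ := MvPolynomial.X 0 * (MvPolynomial.X 1 - 1)
    GammaDistinguished p ∧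
    ((0 : ℂ), (0 : ℂ)) ∈ Zset p ∩ G2 ∧
    (((5 / 2 : ℂ), (1 : ℂ)) ∈ Zset p) ∧
    (((5 / 2 : ℂ), (1 : ℂ)) ∉ G2 ∪ bGamma ∪ piE2) ∧
    ¬ (Zset p ⊆ G2 ∪ bGamma ∪ piE2) := by
  set p : MvPolynomial (Fin 2) ℂ := MvPolynomial.X 0 * (MvPolynomial.X 1 - 1) with hpdef
  have h00 : ((0 : ℂ), (0 : ℂ)) ∈ Zset p ∩ G2 := by
    refine ⟨(Zeval _).2 (by norm_num), 0, 0, by simp, by simp, by norm_num⟩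
  have h52z : (((5 / 2 : ℂ), (1 : ℂ)) ∈ Zset p) := (Zeval _).2 (by norm_num)
  have h52n : (((5 / 2 : ℂ), (1 : ℂ)) ∉ G2 ∪ bGamma ∪ piE2) := by
    rintro ((⟨z₁, z₂, h1, h2, heq⟩ | ⟨z₁, z₂, h1, h2, heq⟩) | ⟨z₁, z₂, h1, h2, heq⟩) <;>
    · obtain ⟨hs, hp⟩ := Prod.mk.injEq .. ▸ heq
      rcases key_root z₁ z₂ hs.symm hp.symm with ⟨e1, e2⟩ | ⟨e1, e2⟩ <;>
        linarith
  refine ⟨⟨⟨_, h00⟩, ?_⟩, h00, h52z, h52n, fun hsub => h52n (hsub h52z)⟩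
  rintro w ⟨hz, ⟨z₁, z₂, h1, h2, rfl⟩, hnG⟩
  have hz' : (z₁ + z₂) * (z₁ * z₂ - 1) = 0 := (Zeval _).1 hz
  rcases mul_eq_zero.1 hz' with h | h
  · -- z₁ + z₂ = 0
    have hzz : z₂ = -z₁ := by linear_combination h
    have he : ‖z₂‖ = ‖z₁‖ := by rw [hzz, norm_neg]
    by_cases hlt : ‖z₁‖ < 1
    · exact absurd ⟨z₁, z₂, hlt, he ▸ hlt, rfl⟩ hnG
    · have e1 : ‖z₁‖ = 1 := le_antisymm h1 (not_lt.1 hlt)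
      exact ⟨z₁, z₂, e1, he.trans e1, rfl⟩
  · -- z₁ z₂ = 1
    have hp : z₁ * z₂ = 1 := by linear_combination h
    have habs : ‖z₁‖ * ‖z₂‖ = 1 := by
      rw [← norm_mul, hp, norm_one]
    have e1 : ‖z₁‖ = 1 := by nlinarith [norm_nonneg z₁, norm_nonneg z₂]
    have e2 : ‖z₂‖ = 1 := by nlinarith
    exact ⟨z₁, z₂, e1, e2, rfl⟩
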